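/- Let f ∈ K[X] be an irreducible monic polynomial in one variable and φ an anisotropic quadratic form of dimension n over K. If f divides a polynomial of the form φ(p₁,…,pₙ) with p₁,…,pₙ ∈ K[X] not all divisible by f, then f is a product of at most deg(f) elements of D_{K(X)}(φ), the set of values represented by φ over K(X). -/

import Mathlib

open scoped TensorProduct

noncomputable section

/-- Nonzero values represented by a quadratic form, as a subset of the field. -/
def Dv {K V : Type*} [Field K] [AddCommGroup V] [Module K V]
    (Q : QuadraticForm K V) : Set K :=
  {a | a ≠ 0 ∧ ∃ v, Q v = a}

/-- Values represented by a quadratic form, as a set of units. -/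
def Dunits {K V : Type*} [Field K] [AddCommGroup V] [Module K V]
    (Q : QuadraticForm K V) : Set Kˣ :=
  {u | ∃ v, Q v = (u : K)}

/-- `T_K(Q)`: the subgroup of `Kˣ` generated by the values represented by `Q`. -/
def Tgrp {K V : Type*} [Field K] [AddCommGroup V] [Module K V]
    (Q : QuadraticForm K V) : Subgroup Kˣ :=
  Subgroup.closure (Dunits Q)

/-- `N_K(Q)`: the subgroup of `Kˣ` generated by products of two represented values. -/
def Ngrp {K V : Type*} [Field K] [AddCommGroup V] [Module K V]
    (Q : QuadraticForm K V) : Subgroup Kˣ :=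
  Subgroup.closure {u : Kˣ | ∃ a b : Kˣ, a ∈ Dunits Q ∧ b ∈ Dunits Q ∧ u = a * b}

/-- Products of exactly `m` values represented by `Q`. -/
def Dpow {K V : Type*} [Field K] [AddCommGroup V] [Module K V]
    (Q : QuadraticForm K V) (m : ℕ) : Set K :=
  {x | ∃ c : Fin m → K, (∀ i, c i ∈ Dv Q) ∧ x = ∏ i, c i}

/-- Isotropy of (the scalar extension of) `Q` over a commutative `K`-algebra `F`. -/
def IsotropicOver {K V : Type*} [Field K] [Invertible (2 : K)] [AddCommGroup V] [Module K V]
    (Q : QuadraticForm K V) (F : Type*) [CommRing F] [Algebra K F] : Prop :=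
  ∃ w : F ⊗[K] V, w ≠ 0 ∧ Q.baseChange F w = 0

/-- The polynomial obtained by evaluating `Q` at the generic point in the basis `b`. -/
def genPoly {K V ι : Type*} [Field K] [Invertible (2 : K)] [AddCommGroup V] [Module K V]
    [Fintype ι] (b : Module.Basis ι K V) (Q : QuadraticForm K V) : MvPolynomial ι K :=
  Q.baseChange (MvPolynomial ι K) (∑ i, MvPolynomial.X i ⊗ₜ[K] b i)

/-- The affine coordinate ring of the quadric `Q = 0` (in the coordinates given by `b`). -/
abbrev CoordRing {K V ι : Type*} [Field K] [Invertible (2 : K)] [AddCommGroup V] [Module K V]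
    [Fintype ι] (b : Module.Basis ι K V) (Q : QuadraticForm K V) : Type _ :=
  MvPolynomial ι K ⧸ Ideal.span {genPoly b Q}

/-- The function field `K(Q)` of the quadric `Q = 0`. -/
abbrev FunctionFieldQF {K V ι : Type*} [Field K] [Invertible (2 : K)] [AddCommGroup V]
    [Module K V] [Fintype ι] (b : Module.Basis ι K V) (Q : QuadraticForm K V) : Type _ :=
  FractionRing (CoordRing b Q)


section AuxStmt7
set_option linter.unusedSectionVars false
set_option maxHeartbeats 1000000


variable {K : Type*} [Field K] [Invertible (2 : K)] {n : ℕ}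

/-- coefficient matrix of φ -/
def Cm (φ : QuadraticForm K (Fin n → K)) (i j : Fin n) : K :=
  QuadraticMap.associated (R := K) φ (Pi.single i 1) (Pi.single j 1)

lemma Cm_def (φ : QuadraticForm K (Fin n → K)) (i j : Fin n) :
    Cm φ i j = QuadraticMap.associated (R := K) φ (Pi.single i 1) (Pi.single j 1) := rfl

lemma Cm_symm (φ : QuadraticForm K (Fin n → K)) (i j : Fin n) : Cm φ i j = Cm φ j i := by
  rw [Cm_def, Cm_def]
  conv_lhs => rw [← QuadraticMap.associated_flip]
  rfl

lemma psi_formula (φ : QuadraticForm K (Fin n → K)) (A : Type*) [CommRing A] [Algebra K A]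
    (x : Fin n → A) :
    φ.baseChange A (∑ i, x i ⊗ₜ[K] Pi.single i 1)
      = ∑ i, ∑ j, x i * x j * algebraMap K A (Cm φ i j) := by
  letI : Invertible (2 : A) := (Invertible.map (algebraMap K A) 2).copy 2 (map_ofNat _ 2).symm
  rw [← QuadraticMap.associated_eq_self_apply A (φ.baseChange A),
      QuadraticForm.associated_baseChange]
  simp only [map_sum, LinearMap.coe_sum, Finset.sum_apply, LinearMap.sum_apply,
    LinearMap.BilinForm.baseChange_tmul, Algebra.smul_def]
  refine Finset.sum_congr rfl fun i _ => Finset.sum_congr rfl fun j _ => ?_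
  rw [Cm_symm, Cm_def]
  ring

lemma phi_formula (φ : QuadraticForm K (Fin n → K)) (x : Fin n → K) :
    φ x = ∑ i, ∑ j, x i * x j * Cm φ i j := by
  have hx : x = ∑ i, x i • (Pi.single i 1 : Fin n → K) := by
    funext j
    simp [Finset.sum_apply, Pi.single_apply, eq_comm]
  rw [← QuadraticMap.associated_eq_self_apply K φ x]
  conv_lhs => rw [hx]
  simp only [map_sum, LinearMap.coe_sum, Finset.sum_apply, LinearMap.sum_apply, map_smul,
    LinearMap.map_smul₂, LinearMap.smul_apply, smul_eq_mul, Finset.mul_sum]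
  refine Finset.sum_congr rfl fun i _ => Finset.sum_congr rfl fun j _ => ?_
  rw [Cm_symm, Cm_def]
  ring


variable {K : Type*} [Field K] [Invertible (2 : K)] {n : ℕ}

lemma psi_map (φ : QuadraticForm K (Fin n → K)) {A A' : Type*} [CommRing A] [Algebra K A]
    [CommRing A'] [Algebra K A'] (g : A →ₐ[K] A') (x : Fin n → A) :
    g (φ.baseChange A (∑ i, x i ⊗ₜ[K] Pi.single i 1))
      = φ.baseChange A' (∑ i, g (x i) ⊗ₜ[K] Pi.single i 1) := by
  rw [psi_formula, psi_formula]
  simp [map_sum, map_mul, AlgHom.commutes]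

lemma coeff_mul_top {p q : Polynomial K} {d : ℕ} (hp : p.natDegree ≤ d) (hq : q.natDegree ≤ d) :
    (p * q).coeff (d + d) = p.coeff d * q.coeff d := by
  rw [Polynomial.coeff_mul, Finset.sum_eq_single (d, d)]
  · intro b hb hne
    rw [Finset.HasAntidiagonal.mem_antidiagonal] at hb
    rcases lt_or_ge d b.1 with h1 | h1
    · rw [Polynomial.coeff_eq_zero_of_natDegree_lt (lt_of_le_of_lt hp h1), zero_mul]
    · have h2 : d < b.2 := by
        rcases lt_or_eq_of_le h1 with h | h
        · omega
        · exfalso; apply hne; ext <;> omega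
      rw [Polynomial.coeff_eq_zero_of_natDegree_lt (lt_of_le_of_lt hq h2), mul_zero]
  · intro hmem
    exfalso; apply hmem; rw [Finset.HasAntidiagonal.mem_antidiagonal]

lemma psi_coeff (φ : QuadraticForm K (Fin n → K)) (r : Fin n → Polynomial K) (d : ℕ)
    (hr : ∀ i, (r i).natDegree ≤ d) :
    (φ.baseChange (Polynomial K) (∑ i, r i ⊗ₜ[K] Pi.single i 1)).coeff (d + d)
      = φ (fun i => (r i).coeff d) := by
  rw [psi_formula, phi_formula]
  rw [Polynomial.finset_sum_coeff]
  refine Finset.sum_congr rfl fun i _ => ?_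
  rw [Polynomial.finset_sum_coeff]
  refine Finset.sum_congr rfl fun j _ => ?_
  rw [Polynomial.algebraMap_eq, Polynomial.coeff_mul_C, coeff_mul_top (hr i) (hr j)]

lemma psi_natDegree_le (φ : QuadraticForm K (Fin n → K)) (r : Fin n → Polynomial K) (d : ℕ)
    (hr : ∀ i, (r i).natDegree ≤ d) :
    (φ.baseChange (Polynomial K) (∑ i, r i ⊗ₜ[K] Pi.single i 1)).natDegree ≤ d + d := by
  rw [psi_formula]
  refine Polynomial.natDegree_sum_le_of_forall_le _ _ fun i _ => ?_
  refine Polynomial.natDegree_sum_le_of_forall_le _ _ fun j _ => ?_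
  refine le_trans (Polynomial.natDegree_mul_le) ?_
  rw [Polynomial.algebraMap_eq, Polynomial.natDegree_C, add_zero]
  exact le_trans (Polynomial.natDegree_mul_le) (add_le_add (hr i) (hr j))


set_option linter.unusedSectionVars false
variable {K : Type*} [Field K] [Invertible (2 : K)] {n : ℕ}

/-- key structure of ψ(r) for r ≠ 0 : nonzero, even degree, anisotropic leading coeff. -/
lemma psi_lead (φ : QuadraticForm K (Fin n → K)) (haniso : φ.Anisotropic)
    (r : Fin n → Polynomial K) (hr : r ≠ 0) :
    ∃ d : ℕ, (∀ i, (r i).natDegree ≤ d) ∧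
      (fun i => (r i).coeff d) ≠ 0 ∧
      (φ.baseChange (Polynomial K) (∑ i, r i ⊗ₜ[K] Pi.single i 1)).natDegree = d + d ∧
      (φ.baseChange (Polynomial K) (∑ i, r i ⊗ₜ[K] Pi.single i 1)).leadingCoeff
        = φ (fun i => (r i).coeff d) := by
  classical
  obtain ⟨i₁, hi₁'⟩ := Function.ne_iff.mp hr
  have hi₁ : r i₁ ≠ 0 := by simpa using hi₁'
  set d := Finset.univ.sup (fun i => (r i).natDegree) with hd
  have hle : ∀ i, (r i).natDegree ≤ d := fun i =>
    Finset.le_sup (f := fun i => (r i).natDegree) (Finset.mem_univ i)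
  set l : Fin n → K := fun i => (r i).coeff d with hl
  have hn0 : (Finset.univ : Finset (Fin n)).Nonempty := ⟨i₁, Finset.mem_univ i₁⟩
  have hlne : l ≠ 0 := by
    obtain ⟨i₀, _, hi₀⟩ := Finset.exists_mem_eq_sup Finset.univ hn0 (fun i => (r i).natDegree)
    rw [← hd] at hi₀
    by_cases h0 : r i₀ = 0
    · have hdz : d = 0 := by rw [hi₀, h0, Polynomial.natDegree_zero]
      intro hzero
      have hcz : (r i₁).coeff 0 = 0 := by
        have := congrFun hzero i₁
        simp only [Pi.zero_apply, hl] at this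
        rwa [hdz] at this
      apply hi₁
      have := Polynomial.eq_C_of_natDegree_le_zero (hdz ▸ hle i₁)
      rw [this, hcz, map_zero]
    · intro hzero
      have hcz : (r i₀).coeff d = 0 := by
        have := congrFun hzero i₀
        simpa [hl] using this
      rw [hi₀] at hcz
      exact h0 (Polynomial.leadingCoeff_eq_zero.mp hcz)
  have hphi : φ l ≠ 0 := fun h0 => hlne (haniso l h0)
  have hc : (φ.baseChange (Polynomial K) (∑ i, r i ⊗ₜ[K] Pi.single i 1)).coeff (d + d) = φ l :=
    psi_coeff φ r d hle
  have hdeg : (φ.baseChange (Polynomial K) (∑ i, r i ⊗ₜ[K] Pi.single i 1)).natDegree = d + d := by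
    refine le_antisymm (psi_natDegree_le φ r d hle) ?_
    exact Polynomial.le_natDegree_of_ne_zero (by rw [hc]; exact hphi)
  exact ⟨d, hle, hlne, hdeg, by rw [Polynomial.leadingCoeff, hdeg, hc]⟩


section DpowHelpers
variable {K V : Type*} [Field K] [AddCommGroup V] [Module K V] {Q : QuadraticForm K V}

lemma Dv_inv {a : K} (h : a ∈ Dv Q) : a⁻¹ ∈ Dv Q := by
  obtain ⟨ha, v, hv⟩ := h
  refine ⟨inv_ne_zero ha, a⁻¹ • v, ?_⟩
  rw [QuadraticMap.map_smul, smul_eq_mul, hv]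
  field_simp

lemma Dpow_one {a : K} (h : a ∈ Dv Q) : a ∈ Dpow Q 1 :=
  ⟨fun _ => a, fun _ => h, by simp⟩

lemma Dpow_zero : (1 : K) ∈ Dpow Q 0 :=
  ⟨fun i => i.elim0, fun i => i.elim0, by simp⟩

lemma Dpow_mul {x y : K} {k l : ℕ} (hx : x ∈ Dpow Q k) (hy : y ∈ Dpow Q l) :
    x * y ∈ Dpow Q (k + l) := by
  obtain ⟨c, hc, rfl⟩ := hx
  obtain ⟨c', hc', rfl⟩ := hy
  refine ⟨Fin.append c c', fun i => ?_, ?_⟩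
  · rcases Nat.lt_or_ge (i : ℕ) k with h | h
    · have hi : i = Fin.castAdd l (⟨(i : ℕ), h⟩ : Fin k) := by ext; rfl
      rw [hi, Fin.append_left]; exact hc _
    · obtain ⟨j, rfl⟩ : ∃ j : Fin l, Fin.natAdd k j = i := by
        refine ⟨⟨i - k, by omega⟩, ?_⟩
        ext; simp; omega
      rw [Fin.append_right]; exact hc' _
  · rw [Fin.prod_univ_add]
    simp [Fin.append_left, Fin.append_right]

lemma Dpow_inv {x : K} {k : ℕ} (hx : x ∈ Dpow Q k) : x⁻¹ ∈ Dpow Q k := by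
  obtain ⟨c, hc, rfl⟩ := hx
  exact ⟨fun i => (c i)⁻¹, fun i => Dv_inv (hc i), by rw [← Finset.prod_inv_distrib]⟩

end DpowHelpers

variable {K : Type*} [Field K] [Invertible (2 : K)] {n : ℕ}

lemma main_ind (φ : QuadraticForm K (Fin n → K)) (haniso : φ.Anisotropic) :
    ∀ m : ℕ, ∀ f : Polynomial K, f.Monic → Irreducible f → f.natDegree ≤ m →
    (∃ p : Fin n → Polynomial K, (¬ ∀ i, f ∣ p i) ∧
      f ∣ φ.baseChange (Polynomial K) (∑ i, p i ⊗ₜ[K] Pi.single i 1)) →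
    ∃ k ≤ f.natDegree,
      algebraMap (Polynomial K) (FractionRing (Polynomial K)) f ∈
        Dpow (φ.baseChange (FractionRing (Polynomial K))) k := by
  intro m
  induction m using Nat.strong_induction_on with
  | _ m IH =>
  intro f hmonic hf hfm hex
  classical
  obtain ⟨p, hp, hdvd⟩ := hex
  set F := FractionRing (Polynomial K)
  set algF := algebraMap (Polynomial K) F with halgF
  have hfprime : Prime f := UniqueFactorizationMonoid.irreducible_iff_prime.mp hf
  have hf1 : f ≠ 1 := fun h => hf.not_isUnit (h ▸ isUnit_one)
  have hfdeg0 : f.natDegree ≠ 0 := fun h => hf1 (hmonic.natDegree_eq_zero.mp h)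
  have hf0 : f ≠ 0 := hmonic.ne_zero
  -- remainders
  set r : Fin n → Polynomial K := fun i => p i %ₘ f with hrdef
  have hrd : ∀ i, (r i).natDegree < f.natDegree := fun i =>
    Polynomial.natDegree_modByMonic_lt _ hmonic hf1
  have hfr : ∀ i, f ∣ (p i - r i) := fun i =>
    ⟨p i /ₘ f, by
      have h1 := Polynomial.modByMonic_add_div (p i) f
      rw [hrdef]
      linear_combination -h1⟩
  have hdvdr : f ∣ φ.baseChange (Polynomial K) (∑ i, r i ⊗ₜ[K] Pi.single i 1) := by
    have hsub : f ∣ (φ.baseChange (Polynomial K) (∑ i, p i ⊗ₜ[K] Pi.single i 1)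
        - φ.baseChange (Polynomial K) (∑ i, r i ⊗ₜ[K] Pi.single i 1)) := by
      rw [psi_formula, psi_formula, ← Finset.sum_sub_distrib]
      refine Finset.dvd_sum fun i _ => ?_
      rw [← Finset.sum_sub_distrib]
      refine Finset.dvd_sum fun j _ => ?_
      have key : p i * p j * algebraMap K (Polynomial K) (Cm φ i j)
          - r i * r j * algebraMap K (Polynomial K) (Cm φ i j)
          = (p i * (p j - r j) + (p i - r i) * r j) * algebraMap K (Polynomial K) (Cm φ i j) := by
        ring
      rw [key]
      refine dvd_mul_of_dvd_left ?_ _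
      exact dvd_add (dvd_mul_of_dvd_right (hfr j) _) (dvd_mul_of_dvd_left (hfr i) _)
    have h9 := dvd_sub hdvd hsub
    rwa [sub_sub_cancel] at h9
  -- index where f does not divide
  push_neg at hp
  obtain ⟨i₀, hpi₀⟩ := hp
  have hri₀ : r i₀ ≠ 0 := by
    intro h0
    exact hpi₀ ((Polynomial.modByMonic_eq_zero_iff_dvd hmonic).mp h0)
  have hfri₀ : ¬ f ∣ r i₀ := by
    intro hdv
    exact absurd (Polynomial.natDegree_le_of_dvd hdv hri₀) (not_le.mpr (hrd i₀))
  -- gcd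
  set h : Polynomial K := Finset.univ.gcd r with hhdef
  have hdvh : ∀ i, h ∣ r i := fun i => Finset.gcd_dvd (Finset.mem_univ i)
  choose s hs using hdvh
  have hh0 : h ≠ 0 := by
    intro h0
    exact hri₀ (by rw [hs i₀, h0, zero_mul])
  have hfh : ¬ f ∣ h := fun hdv => hfri₀ (hdv.trans ⟨s i₀, hs i₀⟩)
  have hsi₀ : s i₀ ≠ 0 := by
    intro h0
    exact hri₀ (by rw [hs i₀, h0, mul_zero])
  have hs0 : s ≠ 0 := fun h0 => hsi₀ (congrFun h0 i₀)
  have hprim : ∀ q : Polynomial K, q.Monic → Irreducible q → ¬ (∀ i, q ∣ s i) := by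
    intro q hqm hqi hall
    have hqh : q * h ∣ h := by
      rw [hhdef]
      refine Finset.dvd_gcd fun i _ => ?_
      obtain ⟨t, ht⟩ := hall i
      exact ⟨t, by rw [hs i, ht]; ring⟩
    obtain ⟨w, hw⟩ := hqh
    have : h * 1 = h * (q * w) := by linear_combination hw
    have h1 : (1 : Polynomial K) = q * w := mul_left_cancel₀ hh0 this
    exact hqi.not_isUnit (IsUnit.of_mul_eq_one (a := q) w h1.symm)
  -- ψ r = h * h * ψ s
  have hψrs : φ.baseChange (Polynomial K) (∑ i, r i ⊗ₜ[K] Pi.single i 1)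
      = h * h * φ.baseChange (Polynomial K) (∑ i, s i ⊗ₜ[K] Pi.single i 1) := by
    rw [psi_formula, psi_formula, Finset.mul_sum]
    refine Finset.sum_congr rfl fun i _ => ?_
    rw [Finset.mul_sum]
    refine Finset.sum_congr rfl fun j _ => ?_
    rw [hs i, hs j]; ring
  have hfψs : f ∣ φ.baseChange (Polynomial K) (∑ i, s i ⊗ₜ[K] Pi.single i 1) := by
    have h2 : f ∣ h * h * φ.baseChange (Polynomial K) (∑ i, s i ⊗ₜ[K] Pi.single i 1) :=
      hψrs ▸ hdvdr
    rcases hfprime.dvd_mul.mp h2 with h3 | h3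
    · rcases hfprime.dvd_mul.mp h3 with h4 | h4 <;> exact absurd h4 hfh
    · exact h3
  -- leading structure of c := ψ s
  obtain ⟨d, hdle, hlne, hcdeg, hclead⟩ := psi_lead φ haniso s hs0
  set c := φ.baseChange (Polynomial K) (∑ i, s i ⊗ₜ[K] Pi.single i 1) with hcdef
  set l : Fin n → K := fun i => (s i).coeff d with hldef
  have hφl : φ l ≠ 0 := fun h0 => hlne (haniso _ h0)
  have hc0 : c ≠ 0 := by
    intro h0
    rw [h0, Polynomial.leadingCoeff_zero] at hclead
    exact hφl hclead.symm
  -- d < natDegree f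
  have hdlt : d < f.natDegree := by
    have : ∃ i, (s i).coeff d ≠ 0 := by
      by_contra hno
      push_neg at hno
      exact hlne (funext fun i => hno i)
    obtain ⟨i, hi⟩ := this
    have h1 : d ≤ (s i).natDegree := Polynomial.le_natDegree_of_ne_zero hi
    have h2 : (s i).natDegree < f.natDegree := by
      by_cases h0 : r i = 0
      · have hsz : s i = 0 := by
          rcases mul_eq_zero.mp (h0 ▸ (hs i).symm) with hh | hh
          · exact absurd hh hh0
          · exact hh
        rw [hsz, Polynomial.natDegree_zero]
        exact Nat.pos_of_ne_zero hfdeg0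
      · exact lt_of_le_of_lt
          (Polynomial.natDegree_le_of_dvd ⟨h, by rw [hs i]; ring⟩ h0) (hrd i)
    omega
  have hfdc : f.natDegree ≤ d + d := hcdeg ▸ Polynomial.natDegree_le_of_dvd hfψs hc0
  -- factor c = f * g₀
  obtain ⟨g₀, hg₀⟩ := hfψs
  have hg₀0 : g₀ ≠ 0 := by
    intro h0
    rw [h0, mul_zero] at hg₀
    exact hc0 hg₀
  set u := g₀.leadingCoeff with hudef
  have hu0 : u ≠ 0 := Polynomial.leadingCoeff_ne_zero.mpr hg₀0
  have huφl : u = φ l := by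
    have := hclead
    rw [hg₀, Polynomial.leadingCoeff_mul, hmonic.leadingCoeff, one_mul] at this
    exact this
  set g := g₀ * Polynomial.C u⁻¹ with hgdef
  have hgmonic : g.Monic := Polynomial.monic_mul_leadingCoeff_inv hg₀0
  have hg0 : g ≠ 0 := hgmonic.ne_zero
  have hCug : Polynomial.C u * g = g₀ := by
    rw [hgdef, mul_comm (Polynomial.C u), mul_assoc, ← Polynomial.C_mul,
      inv_mul_cancel₀ hu0, Polynomial.C_1, mul_one]
  have hcfac : c = f * (Polynomial.C u * g) := by rw [hCug]; exact hg₀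
  have hgdvdc : g ∣ c := ⟨f * Polynomial.C u, by rw [hcfac]; ring⟩
  have hgdeg : f.natDegree + g.natDegree = d + d := by
    have h1 : c.natDegree = f.natDegree + g₀.natDegree := by
      rw [hg₀, Polynomial.natDegree_mul hf0 hg₀0]
    have h2 : g.natDegree = g₀.natDegree := by
      rw [hgdef, Polynomial.natDegree_mul hg₀0 (Polynomial.C_ne_zero.mpr (inv_ne_zero hu0)),
        Polynomial.natDegree_C, add_zero]
    omega
  -- inner induction: inverses of monic divisors of g
  have inner : ∀ N : ℕ, ∀ t : Polynomial K, t.natDegree ≤ N → t.Monic → t ∣ g →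
      ∃ k ≤ t.natDegree, (algF t)⁻¹ ∈ Dpow (φ.baseChange F) k := by
    intro N
    induction N with
    | zero =>
      intro t ht hmt _
      have : t = 1 := hmt.natDegree_eq_zero.mp (Nat.le_zero.mp ht)
      refine ⟨0, Nat.zero_le _, ?_⟩
      rw [this, map_one, inv_one]
      exact Dpow_zero
    | succ N IHN =>
      intro t ht hmt htg
      by_cases hu : IsUnit t
      · have : t = 1 := hmt.eq_one_of_isUnit hu
        refine ⟨0, Nat.zero_le _, ?_⟩
        rw [this, map_one, inv_one]
        exact Dpow_zero
      · obtain ⟨q, hqm, hqi, hqt⟩ := Polynomial.exists_monic_irreducible_factor t hu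
        obtain ⟨t₂, ht₂⟩ := hqt
        have hqt2 : (q * t₂).Monic := by rw [← ht₂]; exact hmt
        have ht₂m : t₂.Monic := hqm.of_mul_monic_left hqt2
        have hq0 : q ≠ 0 := hqm.ne_zero
        have ht₂0 : t₂ ≠ 0 := ht₂m.ne_zero
        have hqdeg1 : 1 ≤ q.natDegree := by
          rcases Nat.eq_zero_or_pos q.natDegree with h0 | h0
          · exact absurd (hqm.natDegree_eq_zero.mp h0 ▸ isUnit_one) hqi.not_isUnit
          · exact h0
        have htdeg : t.natDegree = q.natDegree + t₂.natDegree := by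
          rw [ht₂, Polynomial.natDegree_mul hq0 ht₂0]
        have hqg : q ∣ g := dvd_trans ⟨t₂, ht₂⟩ htg
        have hqc : q ∣ c := hqg.trans hgdvdc
        have hgNdeg : g.natDegree ≤ d + d - f.natDegree := by omega
        have hqN : q.natDegree < m := by
          have h1 : q.natDegree ≤ g.natDegree := Polynomial.natDegree_le_of_dvd hqg hg0
          omega
        obtain ⟨kq, hkq, hqmem⟩ := IH q.natDegree hqN q hqm hqi le_rfl
          ⟨s, fun hall => hprim q hqm hqi hall, hqc⟩
        obtain ⟨k₂, hk₂, h₂mem⟩ := IHN t₂ (by omega) ht₂m (dvd_trans ⟨q, by rw [ht₂]; ring⟩ htg)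
        refine ⟨kq + k₂, by omega, ?_⟩
        have : (algF t)⁻¹ = (algF q)⁻¹ * (algF t₂)⁻¹ := by
          rw [ht₂, map_mul, mul_inv]
        rw [this]
        exact Dpow_mul (Dpow_inv hqmem) h₂mem
  -- apply inner to g itself
  obtain ⟨kg, hkg, hginv⟩ := inner g.natDegree g le_rfl hgmonic dvd_rfl
  -- values
  have hinjF : Function.Injective algF := IsFractionRing.injective (Polynomial K) F
  have hcF0 : algF c ≠ 0 := fun h0 => hc0 (hinjF (by rw [h0, map_zero]))
  have hgF0 : algF g ≠ 0 := fun h0 => hg0 (hinjF (by rw [h0, map_zero]))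
  have huF0 : algebraMap K F u ≠ 0 := fun h0 => hu0 ((algebraMap K F).injective (by rw [h0, map_zero]))
  have hCF : algF (Polynomial.C u) = algebraMap K F u := by
    rw [halgF, ← Polynomial.algebraMap_eq, ← IsScalarTower.algebraMap_apply]
  -- memberships
  have hA : algF c ∈ Dv (φ.baseChange F) := by
    refine ⟨hcF0, ∑ i, algF (s i) ⊗ₜ[K] Pi.single i 1, ?_⟩
    have := psi_map φ (IsScalarTower.toAlgHom K (Polynomial K) F) s
    rw [IsScalarTower.coe_toAlgHom'] at this
    rw [hcdef]
    exact this.symm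
  have hB : algebraMap K F u ∈ Dv (φ.baseChange F) := by
    refine ⟨huF0, ∑ i, algebraMap K F (l i) ⊗ₜ[K] Pi.single i 1, ?_⟩
    rw [psi_formula φ F, huφl, phi_formula φ l, map_sum]
    refine Finset.sum_congr rfl fun i _ => ?_
    rw [map_sum]
    refine Finset.sum_congr rfl fun j _ => ?_
    rw [map_mul, map_mul]
  have key : algF f = algF c * ((algebraMap K F u)⁻¹ * (algF g)⁻¹) := by
    have h1 : algF c = algF f * (algebraMap K F u * algF g) := by
      rw [hcfac, map_mul, map_mul, hCF]
    rw [h1]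
    rw [mul_assoc, mul_mul_mul_comm, mul_inv_cancel₀ huF0, mul_inv_cancel₀ hgF0, mul_one, mul_one]
  refine ⟨1 + (1 + kg), by omega, ?_⟩
  rw [key]
  exact Dpow_mul (Dpow_one hA) (Dpow_mul (Dpow_one (Dv_inv hB)) hginv)

end AuxStmt7


/-- if a monic irreducible `f ∈ K[X]` divides a value `φ(p₁,…,pₙ)` with the
`pᵢ` not all divisible by `f`, then `f` is a product of at most `deg f` values of `φ`
over `K(X)`. -/

theorem stmt_7 {K : Type*} [Field K] [Invertible (2 : K)] {n : ℕ}
    (φ : QuadraticForm K (Fin n → K)) (haniso : φ.Anisotropic)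
    (f : Polynomial K) (hmonic : f.Monic) (hf : Irreducible f)
    (h : ∃ p : Fin n → Polynomial K,
      (¬ ∀ i, f ∣ p i) ∧
      f ∣ (φ.baseChange (Polynomial K)) (∑ i, p i ⊗ₜ[K] Pi.single i 1)) :
    ∃ k ≤ f.natDegree,
      algebraMap (Polynomial K) (FractionRing (Polynomial K)) f ∈
        Dpow (φ.baseChange (FractionRing (Polynomial K))) k := by
  exact main_ind φ haniso f.natDegree f hmonic hf le_rfl h

end
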